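/- (Fidelity upper bound from two extreme eigenvalues, the other direction of Eq. (F).) Let W be an n×n complex unitary matrix, let θ₀ ∈ ℝ and 0 ≤ Θ ≤ π, and suppose that both exp(iθ₀) and exp(i(θ₀ + Θ)) are eigenvalues of W. Then there exists a unit vector ψ ∈ ℂⁿ with |⟨ψ, Wψ⟩| ≤ cos(Θ/2). Consequently the fidelity-type quantity inf { |⟨ψ, Wψ⟩| : ‖ψ‖ = 1 } is at most cos(Θ/2). -/

import Mathlib

open Matrix

lemma unitary_dot_preserve {n : ℕ} (W : Matrix (Fin n) (Fin n) ℂ)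
    (hW : W ∈ Matrix.unitaryGroup (Fin n) ℂ) (x y : Fin n → ℂ) :
    star (W *ᵥ x) ⬝ᵥ (W *ᵥ y) = star x ⬝ᵥ y := by
  rw [star_mulVec, dotProduct_mulVec, vecMul_vecMul, ← Matrix.star_eq_conjTranspose,
    (Matrix.mem_unitaryGroup_iff'.mp hW), vecMul_one]

lemma dot_self_real {n : ℕ} (v : Fin n → ℂ) :
    star v ⬝ᵥ v = ((∑ i, Complex.normSq (v i) : ℝ) : ℂ) := by
  simp [dotProduct, Complex.normSq_eq_conj_mul_self, Pi.star_apply]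

/-- normalize a nonzero vector, returning an opaque unit vector -/
lemma exists_unit {n : ℕ} (v : Fin n → ℂ) (hv : v ≠ 0) :
    ∃ u : Fin n → ℂ, (∃ c : ℂ, u = c • v) ∧ star u ⬝ᵥ u = 1 := by
  set r : ℝ := ∑ i, Complex.normSq (v i) with hr
  have hrpos : 0 < r := by
    rcases Function.ne_iff.mp hv with ⟨i, hi⟩
    have : 0 < Complex.normSq (v i) := by
      simpa [Complex.normSq_pos] using hi
    exact lt_of_lt_of_le this (Finset.single_le_sum (fun j _ => Complex.normSq_nonneg (v j))
      (Finset.mem_univ i))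
  refine ⟨(((Real.sqrt r)⁻¹ : ℝ) : ℂ) • v, ⟨_, rfl⟩, ?_⟩
  rw [star_smul, smul_dotProduct, dotProduct_smul, dot_self_real, ← hr]
  simp only [star_trivial, Complex.star_def, Complex.conj_ofReal, smul_eq_mul]
  rw [← Complex.ofReal_mul, ← Complex.ofReal_mul]
  have : (Real.sqrt r)⁻¹ * ((Real.sqrt r)⁻¹ * r) = 1 := by
    rw [← mul_assoc, ← mul_inv, Real.mul_self_sqrt hrpos.le,
      inv_mul_cancel₀ (by positivity : r ≠ 0)]
  rw [this, Complex.ofReal_one]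

lemma two_cos_exp (x : ℝ) :
    Complex.exp (Complex.I * (x : ℂ)) + Complex.exp (-(Complex.I * (x : ℂ))) =
      2 * ((Real.cos x : ℝ) : ℂ) := by
  rw [show Complex.I * (x : ℂ) = (x : ℂ) * Complex.I by ring,
    show -((x : ℂ) * Complex.I) = ((-x : ℝ) : ℂ) * Complex.I by push_cast; ring,
    Complex.exp_mul_I, Complex.exp_mul_I, Complex.ofReal_neg, Complex.cos_neg,
    Complex.sin_neg, Complex.ofReal_cos]
  ring

theorem exists_overlap_le_cos_of_extreme_eigenvalues (n : ℕ)
    (W : Matrix (Fin n) (Fin n) ℂ) (hW : W ∈ Matrix.unitaryGroup (Fin n) ℂ)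
    (Θ θ₀ : ℝ) (hΘ0 : 0 ≤ Θ) (hΘπ : Θ ≤ Real.pi)
    (v₁ : Fin n → ℂ) (hv₁ : v₁ ≠ 0)
    (hev₁ : W *ᵥ v₁ = Complex.exp (Complex.I * θ₀) • v₁)
    (v₂ : Fin n → ℂ) (hv₂ : v₂ ≠ 0)
    (hev₂ : W *ᵥ v₂ = Complex.exp (Complex.I * (θ₀ + Θ)) • v₂) :
    (∃ ψ : Fin n → ℂ, star ψ ⬝ᵥ ψ = 1 ∧
        ‖star ψ ⬝ᵥ (W *ᵥ ψ)‖ ≤ Real.cos (Θ / 2)) ∧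
      sInf { r : ℝ | ∃ ψ : Fin n → ℂ, star ψ ⬝ᵥ ψ = 1 ∧
          r = ‖star ψ ⬝ᵥ (W *ᵥ ψ)‖ } ≤ Real.cos (Θ / 2) := by
  set a₁ := Complex.exp (Complex.I * θ₀) with ha₁
  set a₂ := Complex.exp (Complex.I * (θ₀ + Θ)) with ha₂
  have key : ∃ ψ : Fin n → ℂ, star ψ ⬝ᵥ ψ = 1 ∧
      ‖star ψ ⬝ᵥ (W *ᵥ ψ)‖ ≤ Real.cos (Θ / 2) := by
    rcases eq_or_lt_of_le hΘ0 with h0 | hpos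
    · -- Θ = 0 : any unit eigenvector works
      obtain ⟨u, ⟨c, hc⟩, hcu⟩ := exists_unit v₁ hv₁
      refine ⟨u, hcu, ?_⟩
      have : W *ᵥ u = a₁ • u := by rw [hc, mulVec_smul, hev₁, smul_comm]
      rw [this, dotProduct_smul, hcu, smul_eq_mul, mul_one, ← h0]
      simp [ha₁, Complex.norm_exp]
    · -- Θ > 0 : eigenvectors are orthogonal
      obtain ⟨u₁, ⟨c₁, hc₁⟩, hc₁u⟩ := exists_unit v₁ hv₁
      obtain ⟨u₂, ⟨c₂, hc₂⟩, hc₂u⟩ := exists_unit v₂ hv₂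
      have heu₁ : W *ᵥ u₁ = a₁ • u₁ := by rw [hc₁, mulVec_smul, hev₁, smul_comm]
      have heu₂ : W *ᵥ u₂ = a₂ • u₂ := by rw [hc₂, mulVec_smul, hev₂, smul_comm]
      clear hc₁ hc₂ hev₁ hev₂ hv₁ hv₂
      have hexpΘ : Complex.exp (Complex.I * Θ) ≠ 1 := by
        intro h
        rw [Complex.exp_eq_one_iff] at h
        obtain ⟨k, hk⟩ := h
        have hπ : (0:ℝ) < Real.pi := Real.pi_pos
        have : (Θ : ℂ) = (k : ℂ) * (2 * Real.pi) := by
          refine mul_left_cancel₀ Complex.I_ne_zero ?_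
          rw [hk]; ring
        have hΘeq : Θ = (k : ℝ) * (2 * Real.pi) := by exact_mod_cast this
        rcases lt_trichotomy (k : ℝ) 0 with hkneg | hk0 | hkpos
        · nlinarith
        · rw [hΘeq, hk0, zero_mul] at hpos; exact lt_irrefl 0 hpos
        · have : (1:ℝ) ≤ (k:ℝ) := by exact_mod_cast hkpos
          nlinarith
      have hstar₁ : (starRingEnd ℂ) a₁ * a₂ = Complex.exp (Complex.I * Θ) := by
        rw [ha₁, ha₂, ← Complex.exp_conj, ← Complex.exp_add]
        congr 1
        simp only [_root_.map_mul, Complex.conj_I, Complex.conj_ofReal]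
        ring
      have horth : star u₁ ⬝ᵥ u₂ = 0 := by
        have h := unitary_dot_preserve W hW u₁ u₂
        rw [heu₁, heu₂, star_smul, smul_dotProduct, dotProduct_smul] at h
        simp only [smul_eq_mul, ← mul_assoc, Complex.star_def, hstar₁] at h
        by_contra hne
        exact hexpΘ (mul_right_cancel₀ hne (h.trans (one_mul _).symm))
      have horth' : star u₂ ⬝ᵥ u₁ = 0 := by
        have h : star (star u₁ ⬝ᵥ u₂) = star u₂ ⬝ᵥ u₁ := by
          simp [dotProduct, mul_comm, star_sum]
        rw [← h, horth, star_zero]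
      obtain ⟨s, hs2⟩ : ∃ s : ℂ, (starRingEnd ℂ) s * s = 1/2 := by
        refine ⟨(((Real.sqrt 2)⁻¹ : ℝ) : ℂ), ?_⟩
        rw [Complex.conj_ofReal, ← Complex.ofReal_mul, ← mul_inv,
          Real.mul_self_sqrt (by norm_num : (0:ℝ) ≤ 2)]
        norm_num
      refine ⟨s • (u₁ + u₂), ?_, ?_⟩
      · rw [star_smul, smul_dotProduct, dotProduct_smul, star_add, add_dotProduct,
          dotProduct_add, dotProduct_add, hc₁u, hc₂u, horth, horth']
        simp only [smul_eq_mul, Complex.star_def]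
        linear_combination 2 * hs2
      · have hWψ : W *ᵥ (s • (u₁ + u₂)) = s • (a₁ • u₁ + a₂ • u₂) := by
          rw [mulVec_smul, mulVec_add, heu₁, heu₂]
        have hval : star (s • (u₁ + u₂)) ⬝ᵥ (W *ᵥ (s • (u₁ + u₂))) = (a₁ + a₂) / 2 := by
          rw [hWψ, star_smul, smul_dotProduct, dotProduct_smul, star_add,
            add_dotProduct, dotProduct_add, dotProduct_add, dotProduct_smul, dotProduct_smul,
            dotProduct_smul, dotProduct_smul, hc₁u, hc₂u, horth, horth']
          simp only [smul_eq_mul, Complex.star_def]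
          linear_combination (a₁ + a₂) * hs2
        rw [hval]
        have e1 : Complex.exp (Complex.I * ((θ₀ + Θ/2 : ℝ) : ℂ)) *
            Complex.exp (-(Complex.I * ((Θ/2 : ℝ) : ℂ))) = a₁ := by
          rw [← Complex.exp_add, ha₁]
          congr 1
          push_cast
          ring
        have e2 : Complex.exp (Complex.I * ((θ₀ + Θ/2 : ℝ) : ℂ)) *
            Complex.exp (Complex.I * ((Θ/2 : ℝ) : ℂ)) = a₂ := by
          rw [← Complex.exp_add, ha₂]
          congr 1
          push_cast
          ring
        have hsum : a₁ + a₂ = Complex.exp (Complex.I * ((θ₀ + Θ/2 : ℝ) : ℂ)) *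
            (2 * ((Real.cos (Θ/2) : ℝ) : ℂ)) := by
          rw [← two_cos_exp (Θ/2), mul_add, e1, e2]
          ring
        have hcosnn : 0 ≤ Real.cos (Θ/2) :=
          Real.cos_nonneg_of_mem_Icc ⟨by linarith [Real.pi_pos], by linarith⟩
        rw [hsum, norm_div, norm_mul, Complex.norm_exp, Complex.norm_two]
        rw [show (Complex.I * ((θ₀ + Θ/2 : ℝ) : ℂ)).re = 0 by simp, Real.exp_zero, one_mul]
        rw [show ((2:ℂ) * ((Real.cos (Θ/2) : ℝ) : ℂ)) = (((2 * Real.cos (Θ/2)) : ℝ) : ℂ) by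
          push_cast; ring]
        rw [Complex.norm_real, Real.norm_of_nonneg (by positivity : (0:ℝ) ≤ 2 * Real.cos (Θ/2))]
        linarith
  refine ⟨key, ?_⟩
  obtain ⟨ψ, hψ1, hψ2⟩ := key
  have hmem : ‖star ψ ⬝ᵥ (W *ᵥ ψ)‖ ∈
      { r : ℝ | ∃ ψ : Fin n → ℂ, star ψ ⬝ᵥ ψ = 1 ∧
          r = ‖star ψ ⬝ᵥ (W *ᵥ ψ)‖ } := ⟨ψ, hψ1, rfl⟩
  have hbdd : BddBelow { r : ℝ | ∃ ψ : Fin n → ℂ, star ψ ⬝ᵥ ψ = 1 ∧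
      r = ‖star ψ ⬝ᵥ (W *ᵥ ψ)‖ } := by
    refine ⟨0, fun r hr => ?_⟩
    obtain ⟨φ, _, hrφ⟩ := hr
    rw [hrφ]; exact norm_nonneg _
  exact le_trans (csInf_le hbdd hmem) hψ2
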